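/- Let A ∈ ℝ^{m×n} have restricted isometry constant δ_k of order k. Then for all vectors v, w ∈ ℝⁿ with |supp(v) ∪ supp(w)| ≤ k, one has |⟨v, (I − AᵀA)w⟩| ≤ δ_k · ‖v‖₂ · ‖w‖₂. -/
import Mathlib


open Matrix

/-- The Euclidean (ℓ₂) norm of a vector in ℝ^d. -/
noncomputable def l2 {d : ℕ} (v : Fin d → ℝ) : ℝ := Real.sqrt (∑ i, v i ^ 2)

/-- The restricted isometry constant of order `k` of a matrix `A`: the smallest `δ ≥ 0`
such that `(1 - δ)‖x‖² ≤ ‖Ax‖² ≤ (1 + δ)‖x‖²` for all `k`-sparse vectors `x`. -/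
noncomputable def RIC {m n : ℕ} (A : Matrix (Fin m) (Fin n) ℝ) (k : ℕ) : ℝ :=
  sInf {δ : ℝ | 0 ≤ δ ∧ ∀ x : Fin n → ℝ, (Function.support x).ncard ≤ k →
    (1 - δ) * l2 x ^ 2 ≤ l2 (A *ᵥ x) ^ 2 ∧ l2 (A *ᵥ x) ^ 2 ≤ (1 + δ) * l2 x ^ 2}

private lemma l2_zero {d : ℕ} : l2 (0 : Fin d → ℝ) = 0 := by simp [l2]

private lemma l2_sq {d : ℕ} (x : Fin d → ℝ) : l2 x ^ 2 = ∑ i, x i ^ 2 :=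
  Real.sq_sqrt (Finset.sum_nonneg fun i _ => sq_nonneg _)

private lemma l2_eq_zero {d : ℕ} {x : Fin d → ℝ} (hx : l2 x = 0) : ∀ i, x i = 0 := by
  have h0 : ∑ i, x i ^ 2 = 0 := by
    have := l2_sq x
    rw [hx] at this
    simpa using this.symm
  intro i
  have := (Finset.sum_eq_zero_iff_of_nonneg (fun i _ => sq_nonneg (x i))).mp h0 i
    (Finset.mem_univ i)
  exact pow_eq_zero_iff (by norm_num) |>.mp this

private lemma quad_eq {m n : ℕ} (A : Matrix (Fin m) (Fin n) ℝ) (x : Fin n → ℝ) :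
    ∑ i, x i * ((1 - Aᵀ * A) *ᵥ x) i = l2 x ^ 2 - l2 (A *ᵥ x) ^ 2 := by
  have h1 : ∑ i, x i * ((1 - Aᵀ * A) *ᵥ x) i = x ⬝ᵥ ((1 - Aᵀ * A) *ᵥ x) := rfl
  rw [h1, Matrix.sub_mulVec, Matrix.one_mulVec, dotProduct_sub,
    ← Matrix.mulVec_mulVec, Matrix.dotProduct_mulVec, Matrix.vecMul_transpose,
    l2_sq, l2_sq]
  simp [dotProduct, sq]

private lemma symm_eq {m n : ℕ} (A : Matrix (Fin m) (Fin n) ℝ) (x y : Fin n → ℝ) :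
    ∑ i, x i * ((1 - Aᵀ * A) *ᵥ y) i = ∑ i, y i * ((1 - Aᵀ * A) *ᵥ x) i := by
  have hM : (1 - Aᵀ * A)ᵀ = 1 - Aᵀ * A := by
    simp [Matrix.transpose_sub, Matrix.transpose_mul]
  have h1 : (∑ i, x i * ((1 - Aᵀ * A) *ᵥ y) i) = x ⬝ᵥ ((1 - Aᵀ * A) *ᵥ y) := rfl
  have h2 : (∑ i, y i * ((1 - Aᵀ * A) *ᵥ x) i) = y ⬝ᵥ ((1 - Aᵀ * A) *ᵥ x) := rfl
  rw [h1, h2, Matrix.dotProduct_mulVec, ← Matrix.mulVec_transpose, hM,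
    dotProduct_comm]

private lemma polar {m n : ℕ} (A : Matrix (Fin m) (Fin n) ℝ) (v w : Fin n → ℝ) :
    (∑ i, (v + w) i * ((1 - Aᵀ * A) *ᵥ (v + w)) i)
      - (∑ i, (v - w) i * ((1 - Aᵀ * A) *ᵥ (v - w)) i)
      = 4 * ∑ i, v i * ((1 - Aᵀ * A) *ᵥ w) i := by
  have hs := symm_eq A w v
  rw [Matrix.mulVec_add, Matrix.mulVec_sub, ← Finset.sum_sub_distrib]
  have hr : 4 * ∑ i, v i * ((1 - Aᵀ * A) *ᵥ w) i
      = ∑ i, (2 * (v i * ((1 - Aᵀ * A) *ᵥ w) i) + 2 * (w i * ((1 - Aᵀ * A) *ᵥ v) i)) := by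
    rw [Finset.sum_add_distrib, ← Finset.mul_sum, ← Finset.mul_sum, hs]
    ring
  rw [hr]
  refine Finset.sum_congr rfl fun i _ => ?_
  simp only [Pi.add_apply, Pi.sub_apply]
  ring

private lemma smul_bil {m n : ℕ} (A : Matrix (Fin m) (Fin n) ℝ) (a b : ℝ)
    (v w : Fin n → ℝ) :
    ∑ i, (a • v) i * ((1 - Aᵀ * A) *ᵥ (b • w)) i
      = a * b * ∑ i, v i * ((1 - Aᵀ * A) *ᵥ w) i := by
  rw [Matrix.mulVec_smul, Finset.mul_sum ]
  refine Finset.sum_congr rfl fun i _ => ?_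
  simp only [Pi.smul_apply, smul_eq_mul]
  ring

private lemma l2_smul {d : ℕ} (c : ℝ) (x : Fin d → ℝ) : l2 (c • x) = |c| * l2 x := by
  unfold l2
  have : ∑ i, (c • x) i ^ 2 = c ^ 2 * ∑ i, x i ^ 2 := by
    rw [Finset.mul_sum]
    exact Finset.sum_congr rfl fun i _ => by simp [smul_eq_mul]; ring
  rw [this, Real.sqrt_mul (sq_nonneg c), Real.sqrt_sq_eq_abs]

private lemma parallelogram {d : ℕ} (x y : Fin d → ℝ) :
    l2 (x + y) ^ 2 + l2 (x - y) ^ 2 = 2 * l2 x ^ 2 + 2 * l2 y ^ 2 := by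
  rw [l2_sq, l2_sq, l2_sq, l2_sq, ← Finset.sum_add_distrib, Finset.mul_sum,
    Finset.mul_sum, ← Finset.sum_add_distrib]
  refine Finset.sum_congr rfl fun i _ => ?_
  simp only [Pi.add_apply, Pi.sub_apply]
  ring

private lemma bound_of_mem {m n k : ℕ} (A : Matrix (Fin m) (Fin n) ℝ) {δ : ℝ}
    (hδ : δ ∈ {δ : ℝ | 0 ≤ δ ∧ ∀ x : Fin n → ℝ, (Function.support x).ncard ≤ k →
      (1 - δ) * l2 x ^ 2 ≤ l2 (A *ᵥ x) ^ 2 ∧ l2 (A *ᵥ x) ^ 2 ≤ (1 + δ) * l2 x ^ 2})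
    (v w : Fin n → ℝ)
    (h : (Function.support v ∪ Function.support w).ncard ≤ k) :
    |∑ i, v i * ((1 - Aᵀ * A) *ᵥ w) i| ≤ δ * l2 v * l2 w := by
  obtain ⟨hδ0, hrip⟩ := hδ
  -- quadratic form bound
  have hQ : ∀ x : Fin n → ℝ, (Function.support x).ncard ≤ k →
      |∑ i, x i * ((1 - Aᵀ * A) *ᵥ x) i| ≤ δ * l2 x ^ 2 := by
    intro x hx
    rw [quad_eq]
    obtain ⟨h1, h2⟩ := hrip x hx
    rw [abs_le]
    constructor <;> nlinarith
  by_cases hv : l2 v = 0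
  · have := l2_eq_zero hv
    simp [this, hv]
  by_cases hw : l2 w = 0
  · simp [show w = 0 from funext (l2_eq_zero hw), hw, l2_zero]
  have ha : 0 < l2 v := lt_of_le_of_ne (Real.sqrt_nonneg _) (Ne.symm hv)
  have hb : 0 < l2 w := lt_of_le_of_ne (Real.sqrt_nonneg _) (Ne.symm hw)
  set a := l2 v with hadef
  set b := l2 w with hbdef
  set v' : Fin n → ℝ := a⁻¹ • v with hv'
  set w' : Fin n → ℝ := b⁻¹ • w with hw'
  have hl2v' : l2 v' = 1 := by
    rw [hv', l2_smul, abs_inv, abs_of_pos ha, inv_mul_cancel₀ (ne_of_gt ha)]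
  have hl2w' : l2 w' = 1 := by
    rw [hw', l2_smul, abs_inv, abs_of_pos hb, inv_mul_cancel₀ (ne_of_gt hb)]
  -- support bounds
  have hsupp : ∀ (c d : ℝ), (Function.support (c • v + d • w)).ncard ≤ k := by
    intro c d
    refine le_trans (Set.ncard_le_ncard ?_ (Set.toFinite _)) h
    intro i hi
    simp only [Set.mem_union, Function.mem_support] at *
    by_contra hc
    push_neg at hc
    apply hi
    simp [hc.1, hc.2]
  have hsum : (Function.support (v' + w')).ncard ≤ k := hsupp a⁻¹ b⁻¹
  have hdiff : (Function.support (v' - w')).ncard ≤ k := by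
    have : v' - w' = a⁻¹ • v + (-(b⁻¹)) • w := by
      funext i
      simp [hv', hw', sub_eq_add_neg]
    rw [this]
    exact hsupp _ _
  -- polarization bound for normalized vectors
  have hpol := polar A v' w'
  have h1 := hQ (v' + w') hsum
  have h2 := hQ (v' - w') hdiff
  have hpar := parallelogram v' w'
  rw [hl2v', hl2w'] at hpar
  have hB' : |∑ i, v' i * ((1 - Aᵀ * A) *ᵥ w') i| ≤ δ := by
    have h4 : |4 * ∑ i, v' i * ((1 - Aᵀ * A) *ᵥ w') i| ≤ 4 * δ := by
      rw [← hpol]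
      calc |(∑ i, (v' + w') i * ((1 - Aᵀ * A) *ᵥ (v' + w')) i)
            - (∑ i, (v' - w') i * ((1 - Aᵀ * A) *ᵥ (v' - w')) i)|
          ≤ |∑ i, (v' + w') i * ((1 - Aᵀ * A) *ᵥ (v' + w')) i|
            + |∑ i, (v' - w') i * ((1 - Aᵀ * A) *ᵥ (v' - w')) i| := abs_sub _ _
        _ ≤ δ * l2 (v' + w') ^ 2 + δ * l2 (v' - w') ^ 2 := add_le_add h1 h2
        _ = δ * (l2 (v' + w') ^ 2 + l2 (v' - w') ^ 2) := by ring
        _ = 4 * δ := by rw [hpar]; ring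
    rw [abs_mul] at h4
    simp only [abs_of_nonneg (by norm_num : (0:ℝ) ≤ 4)] at h4
    linarith
  -- scale back
  have hscale : ∑ i, v' i * ((1 - Aᵀ * A) *ᵥ w') i
      = a⁻¹ * b⁻¹ * ∑ i, v i * ((1 - Aᵀ * A) *ᵥ w) i := smul_bil A a⁻¹ b⁻¹ v w
  rw [hscale, abs_mul, abs_mul, abs_inv, abs_inv, abs_of_pos ha, abs_of_pos hb] at hB'
  have hab : 0 < a * b := mul_pos ha hb
  calc |∑ i, v i * ((1 - Aᵀ * A) *ᵥ w) i|
      = a * b * (a⁻¹ * b⁻¹ * |∑ i, v i * ((1 - Aᵀ * A) *ᵥ w) i|) := by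
        field_simp
    _ ≤ a * b * δ := mul_le_mul_of_nonneg_left hB' (le_of_lt hab)
    _ = δ * a * b := by ring

private lemma S_nonempty {m n k : ℕ} (A : Matrix (Fin m) (Fin n) ℝ) :
    Set.Nonempty {δ : ℝ | 0 ≤ δ ∧ ∀ x : Fin n → ℝ, (Function.support x).ncard ≤ k →
      (1 - δ) * l2 x ^ 2 ≤ l2 (A *ᵥ x) ^ 2 ∧ l2 (A *ᵥ x) ^ 2 ≤ (1 + δ) * l2 x ^ 2} := by
  refine ⟨max (∑ i, ∑ j, A i j ^ 2) 1, le_trans zero_le_one (le_max_right _ _),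
    fun x _ => ?_⟩
  have hL : (0:ℝ) ≤ l2 x ^ 2 := sq_nonneg _
  have hU : (0:ℝ) ≤ l2 (A *ᵥ x) ^ 2 := sq_nonneg _
  constructor
  · have h1 : (1:ℝ) - max (∑ i, ∑ j, A i j ^ 2) 1 ≤ 0 := by
      have := le_max_right (∑ i, ∑ j, A i j ^ 2) (1:ℝ)
      linarith
    nlinarith
  · rw [l2_sq, l2_sq]
    have hCS : ∀ i, (A *ᵥ x) i ^ 2 ≤ (∑ j, A i j ^ 2) * ∑ j, x j ^ 2 := by
      intro i
      have : (A *ᵥ x) i = ∑ j, A i j * x j := rfl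
      rw [this]
      exact Finset.sum_mul_sq_le_sq_mul_sq _ _ _
    calc ∑ i, (A *ᵥ x) i ^ 2
        ≤ ∑ i, (∑ j, A i j ^ 2) * ∑ j, x j ^ 2 := Finset.sum_le_sum fun i _ => hCS i
      _ = (∑ i, ∑ j, A i j ^ 2) * ∑ j, x j ^ 2 := by rw [Finset.sum_mul]
      _ ≤ (1 + max (∑ i, ∑ j, A i j ^ 2) 1) * ∑ j, x j ^ 2 := by
          refine mul_le_mul_of_nonneg_right ?_
            (Finset.sum_nonneg fun j _ => sq_nonneg _)
          have := le_max_left (∑ i, ∑ j, A i j ^ 2) (1:ℝ)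
          linarith

/-- For any `v, w ∈ ℝⁿ` with `|supp v ∪ supp w| ≤ k`,
`|⟨v, (I - AᵀA)w⟩| ≤ δ_k ‖v‖₂ ‖w‖₂`. -/
theorem stmt2 {m n k : ℕ} (A : Matrix (Fin m) (Fin n) ℝ) (v w : Fin n → ℝ)
    (h : (Function.support v ∪ Function.support w).ncard ≤ k) :
    |∑ i, v i * ((1 - Aᵀ * A) *ᵥ w) i| ≤ RIC A k * l2 v * l2 w := by
  by_cases hv : l2 v = 0
  · have := l2_eq_zero hv
    simp [this, hv]
  by_cases hw : l2 w = 0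
  · simp [show w = 0 from funext (l2_eq_zero hw), hw, l2_zero]
  have ha : 0 < l2 v := lt_of_le_of_ne (Real.sqrt_nonneg _) (Ne.symm hv)
  have hb : 0 < l2 w := lt_of_le_of_ne (Real.sqrt_nonneg _) (Ne.symm hw)
  have hab : 0 < l2 v * l2 w := mul_pos ha hb
  have hlb : |∑ i, v i * ((1 - Aᵀ * A) *ᵥ w) i| / (l2 v * l2 w) ≤ RIC A k := by
    refine le_csInf (S_nonempty A) fun δ hδ => ?_
    rw [div_le_iff₀ hab]
    have := bound_of_mem A hδ v w h
    calc |∑ i, v i * ((1 - Aᵀ * A) *ᵥ w) i| ≤ δ * l2 v * l2 w := this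
      _ = δ * (l2 v * l2 w) := by ring
  rw [div_le_iff₀ hab] at hlb
  calc |∑ i, v i * ((1 - Aᵀ * A) *ᵥ w) i| ≤ RIC A k * (l2 v * l2 w) := hlb
    _ = RIC A k * l2 v * l2 w := by ring
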